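/- Let m > 0 and p₁ be real numbers. There exist real numbers s₁, s₂, s₃ satisfying s₁ + s₂ + s₃ = 0, s₁² + s₂² + s₃² = m, and s₁³ + s₂³ + s₃³ = m·p₁ if and only if p₁² ≤ m/6. -/
import Mathlib


theorem stmt_2 (m p₁ : ℝ) (hm : 0 < m) :
    (∃ s₁ s₂ s₃ : ℝ, s₁ + s₂ + s₃ = 0 ∧ s₁ ^ 2 + s₂ ^ 2 + s₃ ^ 2 = m ∧
      s₁ ^ 3 + s₂ ^ 3 + s₃ ^ 3 = m * p₁) ↔ p₁ ^ 2 ≤ m / 6 := by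
  constructor
  · rintro ⟨a, b, c, h1, h2, h3⟩
    have hc : c = -a - b := by linarith
    subst hc
    have key : 6 * (m * p₁) ^ 2 ≤ m ^ 3 := by
      have hid : m ^ 3 - 6 * (m * p₁) ^ 2 = 2 * ((a - b) * (2 * a + b) * (a + 2 * b)) ^ 2 := by
        rw [← h3, ← h2]; ring
      nlinarith [sq_nonneg ((a - b) * (2 * a + b) * (a + 2 * b))]
    nlinarith [sq_nonneg m, mul_pos hm hm]
  · intro hp
    set r := Real.sqrt (2 * m / 3) with hr
    have hr2 : r ^ 2 = 2 * m / 3 := Real.sq_sqrt (by linarith)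
    have hrpos : 0 < r := Real.sqrt_pos.mpr (by linarith)
    set A : ℝ := (3 / 4) * r ^ 3 with hA
    have hApos : 0 < A := by positivity
    have hA2 : A ^ 2 = m ^ 3 / 6 := by
      have h6 : A ^ 2 = (9 / 16) * (r ^ 2) ^ 3 := by rw [hA]; ring
      rw [h6, hr2]; ring
    set cv : ℝ := m * p₁ / A with hcv
    have hcv1 : cv ^ 2 ≤ 1 := by
      rw [hcv, div_pow, div_le_one (by positivity), hA2]
      nlinarith [sq_nonneg p₁, mul_pos hm hm]
    have hcvl : -1 ≤ cv := by nlinarith [sq_nonneg (cv + 1)]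
    have hcvu : cv ≤ 1 := by nlinarith [sq_nonneg (cv - 1)]
    set θ := Real.arccos cv / 3 with hθ
    set u := Real.cos θ with hu
    set v := Real.sin θ with hv
    have huv : u ^ 2 + v ^ 2 = 1 := by
      rw [hu, hv, add_comm]; exact Real.sin_sq_add_cos_sq θ
    have htriple : 4 * u ^ 3 - 3 * u = cv := by
      have h3 : 3 * θ = Real.arccos cv := by rw [hθ]; ring
      have := Real.cos_three_mul θ
      rw [h3, Real.cos_arccos hcvl hcvu] at this
      linarith
    have hcvA : cv * A = m * p₁ := by
      rw [hcv]; field_simp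
    have hs3 : Real.sqrt 3 ^ 2 = 3 := Real.sq_sqrt (by norm_num)
    refine ⟨r * u, r * (-u / 2 - Real.sqrt 3 * v / 2),
      r * (-u / 2 + Real.sqrt 3 * v / 2), by ring, ?_, ?_⟩
    · linear_combination (r ^ 2 * v ^ 2 / 2) * hs3 + (3 / 2) * r ^ 2 * huv + (3 / 2) * hr2
    · have hr3 : (3 / 4) * r ^ 3 * (4 * u ^ 3 - 3 * u) = m * p₁ := by
        rw [htriple, ← hA]; linarith [hcvA]
      linear_combination hr3 - (3 * u * v ^ 2 * r ^ 3 / 4) * hs3 - (9 / 4) * u * r ^ 3 * huv
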